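/- Let k be a field of characteristic zero and let f, g ∈ k[T] be non-zero coprime polynomials. If π ∈ k[T] is an irreducible polynomial which divides f_n = f^n - g^n and also divides f_m = f^m - g^m for some 1 ≤ m < n (i.e., π is a non-primitive prime divisor of f_n), then π does not divide Φ_n(f, g). -/

import Mathlib

/-- In characteristic zero, a non-primitive prime divisor of `f^n - g^n` does not
divide the homogenized `n`-th cyclotomic polynomial evaluated at `(f, g)`. -/
theorem stmt_6 {k : Type*} [Field k] [CharZero k]
    (f g : Polynomial k) (hf : f ≠ 0) (hg : g ≠ 0) (hfg : IsCoprime f g)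
    (π : Polynomial k) (hπ : Irreducible π)
    (n : ℕ) (hn : 1 ≤ n) (hdvd : π ∣ f ^ n - g ^ n)
    (m : ℕ) (hm1 : 1 ≤ m) (hmn : m < n) (hdvdm : π ∣ f ^ m - g ^ m) :
    ¬ π ∣ (∑ i ∈ Finset.range (n.totient + 1),
        Polynomial.C ((Polynomial.cyclotomic n k).coeff i) * f ^ i * g ^ (n.totient - i)) := by
  haveI := Fact.mk hπ
  intro hdvdΦ
  set K := AdjoinRoot π
  set φ := AdjoinRoot.mk π with hφ
  haveI : CharZero K := charZero_of_injective_algebraMap (algebraMap k K).injective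
  -- π does not divide g
  have hπg : ¬ π ∣ g := by
    intro h
    have hfn : π ∣ f ^ n := by
      have := dvd_add hdvd ((dvd_pow h (by omega) : π ∣ g ^ n))
      simpa using this
    have hπf : π ∣ f := hπ.prime.dvd_of_dvd_pow hfn
    exact hπ.not_isUnit (hfg.isUnit_of_dvd' hπf h)
  have hG : φ g ≠ 0 := fun h => hπg ((AdjoinRoot.mk_eq_zero).mp h)
  set F := φ f with hF
  set G := φ g with hGdef
  set ζ : K := F / G with hζ
  have hpow : ∀ l : ℕ, π ∣ f ^ l - g ^ l → ζ ^ l = 1 := by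
    intro l hl
    have h0 : φ (f ^ l - g ^ l) = 0 := AdjoinRoot.mk_eq_zero.mpr hl
    have h1 : F ^ l = G ^ l := by
      have := h0
      rw [map_sub, map_pow, map_pow] at this
      linear_combination this
    rw [hζ, div_pow, h1, div_self (pow_ne_zero _ hG)]
  have hζn : ζ ^ n = 1 := hpow n hdvd
  have hζm : ζ ^ m = 1 := hpow m hdvdm
  set d := n.totient with hd
  -- image of the sum
  have h0 : φ (∑ i ∈ Finset.range (d + 1),
      Polynomial.C ((Polynomial.cyclotomic n k).coeff i) * f ^ i * g ^ (d - i)) = 0 :=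
    AdjoinRoot.mk_eq_zero.mpr hdvdΦ
  have hsum : (∑ i ∈ Finset.range (d + 1),
      ((Polynomial.cyclotomic n K).coeff i) * F ^ i * G ^ (d - i)) = 0 := by
    rw [← h0, map_sum]
    refine Finset.sum_congr rfl fun i _ => ?_
    rw [map_mul, map_mul, map_pow, map_pow]
    congr 1
    congr 1
    rw [← Polynomial.map_cyclotomic n (algebraMap k K), Polynomial.coeff_map]
    rw [AdjoinRoot.mk_C, AdjoinRoot.algebraMap_eq]
  -- relate to evaluation of cyclotomic at ζ
  have heval : (Polynomial.cyclotomic n K).eval ζ * G ^ d = 0 := by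
    rw [Polynomial.eval_eq_sum_range, Polynomial.natDegree_cyclotomic, Finset.sum_mul, ← hsum]
    refine Finset.sum_congr rfl fun i hi => ?_
    have hi' : i ≤ d := by
      simpa [hd] using Nat.lt_succ_iff.mp (Finset.mem_range.mp hi)
    have : G ^ d = G ^ i * G ^ (d - i) := by
      rw [← pow_add, Nat.add_sub_cancel' hi']
    rw [this]
    have hterm : ζ ^ i * (G ^ i * G ^ (d - i)) = F ^ i * G ^ (d - i) := by
      rw [hζ, div_pow]
      field_simp
      rw [← mul_assoc, div_mul_cancel₀ _ (pow_ne_zero _ hG), mul_comm]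
    calc (Polynomial.cyclotomic n K).coeff i * ζ ^ i * (G ^ i * G ^ (d - i))
        = (Polynomial.cyclotomic n K).coeff i * (ζ ^ i * (G ^ i * G ^ (d - i))) := by ring
      _ = (Polynomial.cyclotomic n K).coeff i * (F ^ i * G ^ (d - i)) := by rw [hterm]
      _ = (Polynomial.cyclotomic n K).coeff i * F ^ i * G ^ (d - i) := by ring
  have heval0 : (Polynomial.cyclotomic n K).IsRoot ζ := by
    have := mul_eq_zero.mp heval
    rcases this with h | h
    · exact h
    · exact absurd h (pow_ne_zero _ hG)
  haveI : NeZero (n : K) := ⟨Nat.cast_ne_zero.mpr (by omega)⟩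
  have hprim : IsPrimitiveRoot ζ n := (Polynomial.isRoot_cyclotomic_iff).mp heval0
  have hnm : n ∣ m := hprim.dvd_of_pow_eq_one m hζm
  have := Nat.le_of_dvd (by omega) hnm
  omega
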